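/- Let k ≥ 1 and A ∈ ℝ^{n×m} with m ≥ k. Then the minimum, over all sets S of k column indices and all matrices V ∈ ℝ^{k×m}, of |A − A_S V|_∞ is at most (k+1) times the minimum of |A − B|_∞ over all matrices B ∈ ℝ^{n×m} of rank at most k. -/

import Mathlib

open Matrix

/-- The entrywise `ℓ_∞` norm of a matrix `M ∈ ℝ^{n×m}`. -/
noncomputable def matSupNorm {n m : ℕ} (M : Matrix (Fin n) (Fin m) ℝ) : ℝ :=
  ⨆ i, ⨆ j, |M i j|

lemma matSupNorm_nonneg {n m : ℕ} (M : Matrix (Fin n) (Fin m) ℝ) : 0 ≤ matSupNorm M :=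
  Real.iSup_nonneg fun _ => Real.iSup_nonneg fun _ => abs_nonneg _

lemma abs_entry_le_matSupNorm {n m : ℕ} (M : Matrix (Fin n) (Fin m) ℝ) (i : Fin n) (j : Fin m) :
    |M i j| ≤ matSupNorm M :=
  le_trans (le_ciSup (f := fun j => |M i j|) (Set.Finite.bddAbove (Set.finite_range _)) j)
    (le_ciSup (f := fun i => ⨆ j, |M i j|) (Set.Finite.bddAbove (Set.finite_range _)) i)

lemma matSupNorm_le {n m : ℕ} {M : Matrix (Fin n) (Fin m) ℝ} {c : ℝ} (hc : 0 ≤ c)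
    (h : ∀ i j, |M i j| ≤ c) : matSupNorm M ≤ c :=
  Real.iSup_le (fun i => Real.iSup_le (h i) hc) hc

lemma gram_mulVec_zero_iff {n r : ℕ} (M : Matrix (Fin n) (Fin r) ℝ) (v : Fin r → ℝ) :
    (Mᵀ * M) *ᵥ v = 0 ↔ M *ᵥ v = 0 := by
  have h := Matrix.ker_mulVecLin_transpose_mul_self M
  rw [SetLike.ext_iff] at h
  simpa only [LinearMap.mem_ker, Matrix.mulVecLin_apply] using h v

lemma gram_det_pos {n r : ℕ} (M : Matrix (Fin n) (Fin r) ℝ)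
    (h : ∀ v, M *ᵥ v = 0 → v = 0) : 0 < det (Mᵀ * M) := by
  have hpd : (Mᵀ * M).PosDef := by
    rw [posDef_iff_dotProduct_mulVec]
    constructor
    · unfold Matrix.IsHermitian
      rw [conjTranspose_eq_transpose_of_trivial, transpose_mul, transpose_transpose]
    · intro x hx
      have hMx : M *ᵥ x ≠ 0 := fun h0 => hx (h x h0)
      have hdot : star x ⬝ᵥ ((Mᵀ * M) *ᵥ x) = (M *ᵥ x) ⬝ᵥ (M *ᵥ x) := by
        rw [star_trivial, ← mulVec_mulVec, dotProduct_mulVec, vecMul_transpose]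
      rw [hdot]
      have h1 : 0 ≤ (M *ᵥ x) ⬝ᵥ (M *ᵥ x) :=
        Finset.sum_nonneg fun i _ => mul_self_nonneg _
      rcases h1.lt_or_eq with h2 | h2
      · exact h2
      · exact absurd (dotProduct_self_eq_zero.mp h2.symm) hMx
  exact hpd.det_pos

lemma mulVec_eq_zero_of_gram_det_ne_zero {n r : ℕ} (M : Matrix (Fin n) (Fin r) ℝ)
    (hdet : det (Mᵀ * M) ≠ 0) : ∀ v, M *ᵥ v = 0 → v = 0 := by
  intro v hv
  by_contra hne
  exact hdet (Matrix.exists_mulVec_eq_zero_iff.mp ⟨v, hne, (gram_mulVec_zero_iff M v).2 hv⟩)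

lemma gram_update {n r m : ℕ} (B : Matrix (Fin n) (Fin m) ℝ) (T : Fin r → Fin m)
    (i : Fin r) (j : Fin m) (v : Fin r → ℝ)
    (hv : (B.submatrix id T) *ᵥ v = fun a => B a j) :
    det ((B.submatrix id (Function.update T i j))ᵀ * B.submatrix id (Function.update T i j))
      = v i ^ 2 * det ((B.submatrix id T)ᵀ * B.submatrix id T) := by
  classical
  set M := B.submatrix id T with hMdef
  set E : Matrix (Fin r) (Fin r) ℝ := (1 : Matrix (Fin r) (Fin r) ℝ).updateCol i v with hEdef
  have hM' : B.submatrix id (Function.update T i j) = M * E := by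
    ext a l
    rw [Matrix.mul_apply]
    by_cases hl : l = i
    · subst hl
      have h1 : (∑ b, M a b * E b l) = (M *ᵥ v) a := by
        simp only [Matrix.mulVec, dotProduct]
        exact Finset.sum_congr rfl fun b _ => by rw [hEdef, Matrix.updateCol_self]
      rw [h1, hv]
      simp
    · have hsum : (∑ b, M a b * E b l) = M a l := by
        rw [show (∑ b, M a b * E b l) = ∑ b, M a b * (1 : Matrix (Fin r) (Fin r) ℝ) b l from
          Finset.sum_congr rfl fun b _ => by rw [hEdef, Matrix.updateCol_ne hl],
          ← Matrix.mul_apply, Matrix.mul_one]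
      rw [hsum]
      simp [Function.update_of_ne hl, hMdef]
  have hdetE : det E = v i := by
    rw [hEdef, ← Matrix.cramer_apply, Matrix.cramer_one]
    rfl
  rw [hM', transpose_mul, Matrix.mul_assoc, ← Matrix.mul_assoc Mᵀ M E, det_mul,
    det_mul, det_transpose, hdetE]
  ring

/-- Key column-selection lemma: any matrix of rank at most `k` (with at least `k` columns)
equals `B_S V` for some set `S` of `k` columns and coefficient matrix `V` with entries
bounded by `1`. -/
lemma exists_column_basis {n m : ℕ} (B : Matrix (Fin n) (Fin m) ℝ) :
    ∀ k : ℕ, k ≤ m → B.rank ≤ k →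
      ∃ S : Fin k → Fin m, Function.Injective S ∧ ∃ V : Matrix (Fin k) (Fin m) ℝ,
        (∀ l j, |V l j| ≤ 1) ∧ B.submatrix id S * V = B := by
  intro k
  induction k with
  | zero =>
    intro _ hrank
    refine ⟨Fin.elim0, fun a => a.elim0, 0, fun l => l.elim0, ?_⟩
    have h1 : B.rank = 0 := Nat.le_zero.mp hrank
    rw [rank_eq_finrank_span_cols] at h1
    have h2 : Submodule.span ℝ (Set.range Bᵀ) = ⊥ := Submodule.finrank_eq_zero.mp h1
    have h0 : B = 0 := by
      ext i j
      have h3 : Bᵀ j ∈ (⊥ : Submodule ℝ (Fin n → ℝ)) := h2 ▸ Submodule.subset_span ⟨j, rfl⟩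
      have h4 : Bᵀ j = 0 := (Submodule.mem_bot ℝ).mp h3
      exact congrFun h4 i
    rw [h0]
    simp
  | succ k ih =>
    intro hm hrank
    by_cases hind : ∃ T : Fin (k + 1) → Fin m,
        LinearIndependent ℝ (fun l => Bᵀ (T l))
    · haveI : Nonempty (Fin m) := ⟨⟨0, Nat.lt_of_lt_of_le (Nat.succ_pos k) hm⟩⟩
      obtain ⟨T0, hT0⟩ := Finite.exists_max
        (fun T : Fin (k + 1) → Fin m => det ((B.submatrix id T)ᵀ * B.submatrix id T))
      obtain ⟨T1, hT1⟩ := hind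
      have hgT1 : 0 < det ((B.submatrix id T1)ᵀ * B.submatrix id T1) := by
        refine gram_det_pos _ fun v hv => ?_
        refine funext (Fintype.linearIndependent_iff.mp hT1 v ?_)
        funext i0
        have h6 := congrFun hv i0
        simp only [Matrix.mulVec, dotProduct, Matrix.submatrix_apply, id_eq,
          Pi.zero_apply] at h6
        simp only [Finset.sum_apply, Pi.smul_apply, Matrix.transpose_apply, smul_eq_mul,
          Pi.zero_apply]
        rw [← h6]
        exact Finset.sum_congr rfl fun l _ => mul_comm _ _
      have hg0 : 0 < det ((B.submatrix id T0)ᵀ * B.submatrix id T0) :=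
        lt_of_lt_of_le hgT1 (hT0 T1)
      have hker : ∀ v, (B.submatrix id T0) *ᵥ v = 0 → v = 0 :=
        mulVec_eq_zero_of_gram_det_ne_zero _ hg0.ne'
      have hli0 : LinearIndependent ℝ (fun l => Bᵀ (T0 l)) := by
        rw [Fintype.linearIndependent_iff]
        intro g hg
        have hz : (B.submatrix id T0) *ᵥ g = 0 := by
          funext i0
          have h7 := congrFun hg i0
          simp only [Finset.sum_apply, Pi.smul_apply, Matrix.transpose_apply, smul_eq_mul,
            Pi.zero_apply] at h7
          simp only [Matrix.mulVec, dotProduct, Matrix.submatrix_apply, id_eq,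
            Pi.zero_apply]
          rw [← h7]
          exact Finset.sum_congr rfl fun l _ => mul_comm _ _
        exact fun l => congrFun (hker g hz) l
      have hSinj : Function.Injective T0 := by
        intro a b hab
        exact hli0.injective (show Bᵀ (T0 a) = Bᵀ (T0 b) by rw [hab])
      have hspan : Submodule.span ℝ (Set.range fun l => Bᵀ (T0 l))
          = Submodule.span ℝ (Set.range Bᵀ) := by
        apply Submodule.eq_of_le_of_finrank_le
        · refine Submodule.span_mono ?_
          rintro x ⟨l, rfl⟩
          exact ⟨T0 l, rfl⟩
        · rw [finrank_span_eq_card hli0, ← (show B.rank = Module.finrank ℝ (Submodule.span ℝ (Set.range Bᵀ)) from rank_eq_finrank_span_cols B), Fintype.card_fin]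
          exact hrank
      have hcol : ∀ j : Fin m, ∃ v : Fin (k + 1) → ℝ,
          (B.submatrix id T0) *ᵥ v = fun i => B i j := by
        intro j
        have hmem : Bᵀ j ∈ Submodule.span ℝ (Set.range fun l => Bᵀ (T0 l)) := by
          rw [hspan]
          exact Submodule.subset_span ⟨j, rfl⟩
        have hmem2 : Bᵀ j ∈ LinearMap.range (B.submatrix id T0).mulVecLin := by
          rw [Matrix.range_mulVecLin]
          exact hmem
        obtain ⟨v, hv⟩ := hmem2
        exact ⟨v, hv⟩
      choose v hv using hcol
      refine ⟨T0, hSinj, Matrix.of fun l j => v j l, ?_, ?_⟩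
      · intro l j
        have hup := hT0 (Function.update T0 l j)
        rw [gram_update B T0 l j (v j) (hv j)] at hup
        have hsq : (v j l) ^ 2 ≤ 1 := by nlinarith
        have habs : |v j l| ≤ 1 := abs_le_one_iff_mul_self_le_one.mpr (by nlinarith)
        simpa using habs
      · ext i j
        have h9 := congrFun (hv j) i
        simp only [Matrix.mulVec, dotProduct, Matrix.submatrix_apply, id_eq] at h9
        simpa [Matrix.mul_apply] using h9
    · have hrk : B.rank ≤ k := by
        by_contra hgt
        push_neg at hgt
        obtain ⟨b, hbsub, hbspan, hbli⟩ := exists_linearIndependent ℝ (Set.range Bᵀ)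
        have hfinb : b.Finite := (Set.finite_range Bᵀ).subset hbsub
        haveI := hfinb.fintype
        have hrank1 : B.rank = k + 1 := le_antisymm hrank hgt
        have h8 := finrank_span_set_eq_card hbli
        rw [hbspan, ← (show B.rank = Module.finrank ℝ (Submodule.span ℝ (Set.range Bᵀ)) from rank_eq_finrank_span_cols B), hrank1] at h8
        have hcard : Fintype.card ↥b = k + 1 := by rw [← Set.toFinset_card, ← h8]
        let e := (Fintype.equivFinOfCardEq hcard).symm
        have hchoice : ∀ l : Fin (k + 1), ∃ j : Fin m, Bᵀ j = (e l : Fin n → ℝ) :=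
          fun l => hbsub (e l).2
        choose T hT using hchoice
        refine hind ⟨T, ?_⟩
        have heq : (fun l => Bᵀ (T l)) = (fun x : b => (x : Fin n → ℝ)) ∘ e :=
          funext fun l => hT l
        rw [heq]
        exact hbli.comp e e.injective
      obtain ⟨S', hS'inj, V', hV', hBV'⟩ := ih (Nat.le_of_succ_le hm) hrk
      have hj0 : ∃ j0 : Fin m, ∀ l, S' l ≠ j0 := by
        by_contra hno
        push_neg at hno
        have hsurj : Function.Surjective S' := fun j0 => hno j0
        have hcle := Fintype.card_le_of_surjective S' hsurj
        simp only [Fintype.card_fin] at hcle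
        omega
      obtain ⟨j0, hj0⟩ := hj0
      refine ⟨fun l => if h : (l : ℕ) < k then S' ⟨l, h⟩ else j0, ?_,
        Matrix.of fun l j => if h : (l : ℕ) < k then V' ⟨l, h⟩ j else 0, ?_, ?_⟩
      · intro a b hab
        dsimp only at hab
        by_cases ha : (a : ℕ) < k <;> by_cases hb : (b : ℕ) < k
        · rw [dif_pos ha, dif_pos hb] at hab
          have h10 : (⟨(a : ℕ), ha⟩ : Fin k) = ⟨(b : ℕ), hb⟩ := hS'inj hab
          rw [Fin.mk.injEq] at h10
          exact Fin.ext h10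
        · rw [dif_pos ha, dif_neg hb] at hab
          exact absurd hab (hj0 _)
        · rw [dif_neg ha, dif_pos hb] at hab
          exact absurd hab.symm (hj0 _)
        · exact Fin.ext (by omega)
      · intro l j
        dsimp only [Matrix.of_apply]
        split
        · exact hV' _ j
        · simp
      · ext i j
        rw [Matrix.mul_apply, Fin.sum_univ_castSucc]
        have hlt : ∀ l : Fin k, ((Fin.castSucc l : Fin (k + 1)) : ℕ) < k := fun l => l.is_lt
        have hnlt : ¬ ((Fin.last k : Fin (k + 1)) : ℕ) < k := by simp
        simp only [Matrix.submatrix_apply, id_eq, Matrix.of_apply, dif_pos (hlt _),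
          dif_neg hnlt, mul_zero, add_zero, Fin.eta]
        have hBV'ij := congrFun (congrFun hBV' i) j
        rw [Matrix.mul_apply] at hBV'ij
        simpa using hBV'ij

theorem column_subset_selection_linf_approx
    {n m k : ℕ} (hk : 1 ≤ k) (hm : k ≤ m)
    (A : Matrix (Fin n) (Fin m) ℝ) :
    sInf {c : ℝ | ∃ S : Fin k → Fin m, Function.Injective S ∧
        ∃ V : Matrix (Fin k) (Fin m) ℝ, c = matSupNorm (A - A.submatrix id S * V)}
      ≤ ((k : ℝ) + 1) *
        sInf {c : ℝ | ∃ B : Matrix (Fin n) (Fin m) ℝ, B.rank ≤ k ∧ c = matSupNorm (A - B)} := by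
  have hpos : (0 : ℝ) < (k : ℝ) + 1 := by positivity
  set Sc := {c : ℝ | ∃ S : Fin k → Fin m, Function.Injective S ∧
      ∃ V : Matrix (Fin k) (Fin m) ℝ, c = matSupNorm (A - A.submatrix id S * V)} with hSc
  set Rc := {c : ℝ | ∃ B : Matrix (Fin n) (Fin m) ℝ, B.rank ≤ k ∧ c = matSupNorm (A - B)}
    with hRc
  have hbdd : BddBelow Sc := by
    refine ⟨0, ?_⟩
    rintro c ⟨S, hS, V, rfl⟩
    exact matSupNorm_nonneg _
  have hRne : Rc.Nonempty := ⟨matSupNorm (A - 0), 0, by simp [Matrix.rank_zero], rfl⟩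
  have key : ∀ c ∈ Rc, sInf Sc ≤ ((k : ℝ) + 1) * c := by
    rintro c ⟨B, hBrank, rfl⟩
    obtain ⟨S, hSinj, V, hV, hBV⟩ := exists_column_basis B k hm hBrank
    set ε := matSupNorm (A - B) with hε
    have hεnn : 0 ≤ ε := matSupNorm_nonneg _
    have hmem : matSupNorm (A - A.submatrix id S * V) ∈ Sc := ⟨S, hSinj, V, rfl⟩
    refine le_trans (csInf_le hbdd hmem) ?_
    refine matSupNorm_le (by positivity) ?_
    intro i j
    have hBij : B i j = ∑ l, B i (S l) * V l j := by
      have h1 := congrFun (congrFun hBV i) j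
      rw [Matrix.mul_apply] at h1
      simpa using h1.symm
    have hentry : (A - A.submatrix id S * V) i j
        = ((A - B) i j) - ∑ l, (A - B) i (S l) * V l j := by
      simp only [Matrix.sub_apply, Matrix.mul_apply, Matrix.submatrix_apply, id_eq, sub_mul]
      rw [Finset.sum_sub_distrib]
      rw [show (∑ l, B i (S l) * V l j) = B i j from hBij.symm]
      ring
    rw [hentry]
    have htri : |(A - B) i j - ∑ l, (A - B) i (S l) * V l j|
        ≤ |(A - B) i j| + |∑ l, (A - B) i (S l) * V l j| := by
      rw [sub_eq_add_neg]
      refine (abs_add_le _ _).trans ?_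
      rw [abs_neg]
    refine htri.trans ?_
    have hsum : |∑ l, (A - B) i (S l) * V l j| ≤ ∑ l : Fin k, ε := by
      refine (Finset.abs_sum_le_sum_abs _ _).trans (Finset.sum_le_sum fun l _ => ?_)
      rw [abs_mul]
      calc |(A - B) i (S l)| * |V l j|
          ≤ ε * 1 := mul_le_mul (abs_entry_le_matSupNorm _ _ _) (hV l j) (abs_nonneg _) hεnn
        _ = ε := mul_one ε
    have hconst : (∑ _l : Fin k, ε) = (k : ℝ) * ε := by
      rw [Finset.sum_const, Finset.card_univ, Fintype.card_fin, nsmul_eq_mul]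
    have h2 := add_le_add (abs_entry_le_matSupNorm (A - B) i j) hsum
    rw [hconst] at h2
    calc |(A - B) i j| + |∑ l, (A - B) i (S l) * V l j| ≤ ε + (k : ℝ) * ε := h2
      _ = ((k : ℝ) + 1) * ε := by ring
  have hdiv : sInf Sc / ((k : ℝ) + 1) ≤ sInf Rc := by
    refine le_csInf hRne fun c hc => ?_
    rw [div_le_iff₀ hpos]
    calc sInf Sc ≤ ((k : ℝ) + 1) * c := key c hc
      _ = c * ((k : ℝ) + 1) := mul_comm _ _
  have hfin := (div_le_iff₀ hpos).mp hdiv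
  linarith
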